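/- Let δ > 0 be real and let L > M ≥ 1 be natural numbers such that log(1+δ/2)/(L−M) ≤ (log 2)/M. Set θ* = √(3·log(1+δ/2)/(L−M)) and c = 1/2 − sin(2θ*)/(4θ*). Then (1 + c)^L − (1 + c)^M ≤ δ. -/

import Mathlib

lemma sub_sin_le_cube (x : ℝ) (hx : 0 ≤ x) : x - Real.sin x ≤ x ^ 3 / 6 := by
  have key : MonotoneOn (fun z : ℝ => Real.sin z - z + z ^ 3 / 6) (Set.Ici 0) := by
    apply monotoneOn_of_deriv_nonneg (convex_Ici 0)
    · exact Continuous.continuousOn (by continuity)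
    · intro y hy
      exact (((Real.hasDerivAt_sin y).sub (hasDerivAt_id y)).add
        ((hasDerivAt_pow 3 y).div_const 6)).differentiableAt.differentiableWithinAt
    · intro y hy
      have hd : HasDerivAt (fun z : ℝ => Real.sin z - z + z ^ 3 / 6)
          (Real.cos y - 1 + y ^ 2 / 2) y := by
        have := ((Real.hasDerivAt_sin y).sub (hasDerivAt_id y)).add
          ((hasDerivAt_pow 3 y).div_const 6)
        refine this.congr_deriv ?_
        ring
      rw [hd.deriv]
      have := Real.one_sub_sq_div_two_le_cos (x := y)
      linarith
  have := key (Set.mem_Ici.2 (le_refl 0)) (Set.mem_Ici.2 hx) hx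
  simp at this
  linarith

/-- Average-case half of the paper's Theorem 1: for `δ > 0`, naturals `L > M ≥ 1` with
`log(1+δ/2)/(L−M) ≤ (log 2)/M`, setting `θ* = √(3·log(1+δ/2)/(L−M))` and
`c = 1/2 − sin(2θ*)/(4θ*)` one has `(1 + c)^L − (1 + c)^M ≤ δ`. -/
theorem spd_average_case_truncation_bound (δ : ℝ) (hδ : 0 < δ) (L M : ℕ) (hM : 1 ≤ M)
    (hML : M < L)
    (h : Real.log (1 + δ / 2) / ((L : ℝ) - (M : ℝ)) ≤ Real.log 2 / (M : ℝ))
    (θstar c : ℝ)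
    (hθ : θstar = Real.sqrt (3 * Real.log (1 + δ / 2) / ((L : ℝ) - (M : ℝ))))
    (hc : c = 1 / 2 - Real.sin (2 * θstar) / (4 * θstar)) :
    (1 + c) ^ L - (1 + c) ^ M ≤ δ := by
  set t : ℝ := Real.log (1 + δ / 2) / ((L : ℝ) - (M : ℝ)) with ht_def
  have hLM : (0:ℝ) < (L : ℝ) - (M : ℝ) := by
    have : (M:ℝ) < (L:ℝ) := by exact_mod_cast hML
    linarith
  have hlogpos : 0 < Real.log (1 + δ / 2) := Real.log_pos (by linarith)
  have ht : 0 < t := div_pos hlogpos hLM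
  have hθpos : 0 < θstar := by
    rw [hθ]
    apply Real.sqrt_pos.2
    rw [mul_div_assoc]
    positivity
  have hθsq : θstar ^ 2 = 3 * t := by
    rw [hθ, Real.sq_sqrt (by rw [mul_div_assoc]; positivity), mul_div_assoc]
  -- c ≤ t
  have hc_le : c ≤ t := by
    rw [hc]
    have h1 : 2 * θstar - Real.sin (2 * θstar) ≤ (2 * θstar) ^ 3 / 6 :=
      sub_sin_le_cube (2 * θstar) (by linarith)
    have h3 : 1 / 2 - Real.sin (2 * θstar) / (4 * θstar) ≤ θstar ^ 2 / 3 := by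
      rw [div_sub_div _ _ (by norm_num : (2:ℝ) ≠ 0) (by positivity : 4 * θstar ≠ 0),
        div_le_div_iff₀ (by positivity) (by norm_num : (0:ℝ) < 3)]
      nlinarith
    rw [hθsq] at h3
    linarith
  -- 0 ≤ c
  have hc_nonneg : 0 ≤ c := by
    rw [hc]
    have hs := Real.sin_le (x := 2 * θstar) (by linarith)
    have h4 : Real.sin (2 * θstar) / (4 * θstar) ≤ 1 / 2 := by
      rw [div_le_iff₀ (by positivity)]
      linarith
    linarith
  -- exponential bounds
  have hexp : ∀ n : ℕ, (1 + c) ^ n ≤ Real.exp (c * n) := by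
    intro n
    calc (1 + c) ^ n ≤ Real.exp c ^ n := by
          apply pow_le_pow_left₀ (by linarith)
          have := Real.add_one_le_exp c
          linarith
      _ = Real.exp (c * n) := by rw [← Real.exp_nat_mul]; ring_nf
  have hA : (1 + c) ^ M ≤ 2 := by
    refine (hexp M).trans ?_
    have hMpos : (0:ℝ) < (M:ℝ) := by exact_mod_cast hM
    have h5 : t * M ≤ Real.log 2 := by
      have := (div_le_div_iff₀ hLM hMpos).1 h
      rw [ht_def, div_mul_eq_mul_div, div_le_iff₀ hLM]
      linarith [this]
    have h6 : c * M ≤ Real.log 2 := le_trans (by nlinarith) h5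
    calc Real.exp (c * M) ≤ Real.exp (Real.log 2) := Real.exp_le_exp.2 h6
      _ = 2 := Real.exp_log (by norm_num)
  have hB : (1 + c) ^ (L - M) ≤ 1 + δ / 2 := by
    refine (hexp (L - M)).trans ?_
    have hcast : ((L - M : ℕ) : ℝ) = (L:ℝ) - (M:ℝ) := by
      rw [Nat.cast_sub hML.le]
    have h7 : c * ((L - M : ℕ) : ℝ) ≤ Real.log (1 + δ / 2) := by
      rw [hcast]
      have : t * ((L:ℝ) - (M:ℝ)) = Real.log (1 + δ / 2) := by
        rw [ht_def]; field_simp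
      nlinarith
    calc Real.exp (c * (L - M : ℕ)) ≤ Real.exp (Real.log (1 + δ / 2)) :=
        Real.exp_le_exp.2 h7
      _ = 1 + δ / 2 := Real.exp_log (by linarith)
  have h1c : (1:ℝ) ≤ 1 + c := by linarith
  have hA1 : (1:ℝ) ≤ (1 + c) ^ M := by
    simpa using pow_le_pow_left₀ zero_le_one h1c M
  have hB1 : (1:ℝ) ≤ (1 + c) ^ (L - M) := by
    simpa using pow_le_pow_left₀ zero_le_one h1c (L - M)
  have hsplit : (1 + c) ^ L = (1 + c) ^ M * (1 + c) ^ (L - M) := by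
    rw [← pow_add, Nat.add_sub_cancel' hML.le]
  rw [hsplit]
  nlinarith [hA, hB, hA1, hB1]
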